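/- Among all rooted trees of order n, the number of subtrees containing the root is at most 2^(n-1), with equality if and only if the tree is a star rooted at its center. -/

import Mathlib

open SimpleGraph Finset

/-- Eccentricity of a vertex: max distance to any vertex. -/
noncomputable def ecc {V : Type*} [Fintype V] (G : SimpleGraph V) (v : V) : ℕ :=
  Finset.univ.sup (fun u => G.dist v u)

/-- The center: vertices of minimum eccentricity. -/
noncomputable def center {V : Type*} [Fintype V] (G : SimpleGraph V) : Set V :=
  {v | ∀ u, ecc G v ≤ ecc G u}

/-- Total distance of a vertex. -/
noncomputable def totalDist {V : Type*} [Fintype V] (G : SimpleGraph V) (v : V) : ℕ :=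
  ∑ u, G.dist v u

/-- The centroid: vertices of minimum total distance. -/
noncomputable def centroid {V : Type*} [Fintype V] (G : SimpleGraph V) : Set V :=
  {v | ∀ u, totalDist G v ≤ totalDist G u}

/-- Number of subtrees (connected induced subgraphs on nonempty vertex sets) containing `v`. -/
noncomputable def subtreeCount {V : Type*} [Fintype V] (G : SimpleGraph V) (v : V) : ℕ :=
  Nat.card {A : Finset V // v ∈ A ∧ (G.induce (A : Set V)).Connected}

/-- The subtree core: vertices maximizing the number of containing subtrees. -/
noncomputable def core {V : Type*} [Fintype V] (G : SimpleGraph V) : Set V :=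
  {v | ∀ u, subtreeCount G u ≤ subtreeCount G v}

/-- Distance between two sets of vertices. -/
noncomputable def setDist {V : Type*} (G : SimpleGraph V) (S S' : Set V) : ℕ :=
  sInf {n | ∃ u ∈ S, ∃ v ∈ S', G.dist u v = n}

/-- If `r` is adjacent to all other vertices, every set containing `r`
induces a connected subgraph. -/
lemma star_induce_connected {V : Type*} (G : SimpleGraph V) (r : V)
    (h : ∀ v, v ≠ r → G.Adj r v) (A : Set V) (hr : r ∈ A) :
    (G.induce A).Connected := by
  rw [SimpleGraph.connected_iff]
  have key : ∀ a : A, (G.induce A).Reachable ⟨r, hr⟩ a := by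
    rintro ⟨a, ha⟩
    by_cases hra : a = r
    · subst hra
      exact SimpleGraph.Reachable.refl _
    · exact SimpleGraph.Adj.reachable (by exact (h a hra : G.Adj r a))
  exact ⟨fun a b => (key a).symm.trans (key b), ⟨⟨r, hr⟩⟩⟩

/-- If the induced graph on `{r, v}` is connected and `v ≠ r`, then `r` and `v`
are adjacent. -/
lemma adj_of_pair_connected {V : Type*} (G : SimpleGraph V) (r v : V) (hne : v ≠ r)
    (h : (G.induce ({r, v} : Set V)).Connected) : G.Adj r v := by
  have hr : r ∈ ({r, v} : Set V) := Or.inl rfl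
  have hv : v ∈ ({r, v} : Set V) := Or.inr rfl
  obtain ⟨w⟩ := h ⟨r, hr⟩ ⟨v, hv⟩
  have key : ∀ (a b : ({r, v} : Set V)), (G.induce ({r, v} : Set V)).Walk a b →
      (a : V) = (b : V) ∨ G.Adj r v := by
    intro a b w
    induction w with
    | nil => exact Or.inl rfl
    | @cons x y z hxy p ih =>
      right
      have hxyv : G.Adj (x : V) (y : V) := hxy
      rcases x.2 with hx | hx <;> rcases y.2 with hy | hy <;> rw [hx, hy] at hxyv
      · exact absurd hxyv (G.loopless.irrefl r)
      · exact hxyv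
      · exact hxyv.symm
      · exact absurd hxyv (G.loopless.irrefl v)
  rcases key _ _ w with heq | hadj
  · exact absurd heq.symm hne
  · exact hadj

/-- Among rooted trees of order `n`, the number of root-containing
subtrees is at most `2^(n-1)`, with equality iff the tree is a star rooted at its center. -/
theorem subtreeCount_root_le_two_pow {V : Type*} [Fintype V] (G : SimpleGraph V)
    (hT : G.IsTree) (r : V) (n : ℕ) (hn : n = Fintype.card V) :
    subtreeCount G r ≤ 2 ^ (n - 1) ∧
      (subtreeCount G r = 2 ^ (n - 1) ↔ ∀ v, v ≠ r → G.Adj r v) := by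
  classical
  subst hn
  set P : Finset V → Prop := fun A => r ∈ A ∧ (G.induce (A : Set V)).Connected with hP
  have hcount : subtreeCount G r = (univ.filter P).card := by
    rw [subtreeCount, Nat.card_eq_fintype_card]
    simp [Fintype.card_subtype, hP]
  have hsub : univ.filter P ⊆ univ.filter (fun A : Finset V => r ∈ A) := by
    apply Finset.monotone_filter_right
    intro A _ hA
    exact hA.1
  have hstar : (univ.filter (fun A : Finset V => r ∈ A)).card =
      2 ^ (Fintype.card V - 1) := by
    have hbij : (univ.filter (fun A : Finset V => r ∈ A)).card =
        ((univ.erase r).powerset).card := by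
      refine Finset.card_bij' (fun A _ => A.erase r) (fun S _ => insert r S)
        ?_ ?_ ?_ ?_
      · intro A hA
        simp only [Finset.mem_powerset]
        intro x hx
        simp only [Finset.mem_erase] at hx ⊢
        exact ⟨hx.1, Finset.mem_univ x⟩
      · intro S hS
        simp only [Finset.mem_filter]
        exact ⟨Finset.mem_univ _, Finset.mem_insert_self r S⟩
      · intro A hA
        simp only [Finset.mem_filter] at hA
        exact Finset.insert_erase hA.2
      · intro S hS
        simp only [Finset.mem_powerset] at hS
        exact Finset.erase_insert (fun hrS => (Finset.mem_erase.mp (hS hrS)).1 rfl)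
    rw [hbij, Finset.card_powerset, Finset.card_erase_of_mem (Finset.mem_univ r),
      Finset.card_univ]
  have hle : subtreeCount G r ≤ 2 ^ (Fintype.card V - 1) := by
    rw [hcount, ← hstar]
    exact Finset.card_le_card hsub
  refine ⟨hle, ?_, ?_⟩
  · intro heq v hv
    have hcards : (univ.filter (fun A : Finset V => r ∈ A)).card ≤ (univ.filter P).card := by
      rw [← hcount, heq, hstar]
    have hfeq := Finset.eq_of_subset_of_card_le hsub hcards
    have hmem : ({r, v} : Finset V) ∈ univ.filter P := by
      rw [hfeq]
      simp
    have hconn : (G.induce (({r, v} : Finset V) : Set V)).Connected :=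
      (Finset.mem_filter.mp hmem).2.2
    have hcoe : (({r, v} : Finset V) : Set V) = ({r, v} : Set V) := by simp
    exact adj_of_pair_connected G r v hv (hcoe ▸ hconn)
  · intro hadj
    have hfeq : univ.filter P = univ.filter (fun A : Finset V => r ∈ A) := by
      apply Finset.filter_congr
      intro A _
      constructor
      · exact fun h => h.1
      · intro hrA
        refine ⟨hrA, star_induce_connected G r hadj _ (by simpa using hrA)⟩
    rw [hcount, hfeq, hstar]
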